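/- Let v ∈ L^q(ℝ³; ℝ³) with 1 ≤ q < ∞ and let φ : ℝ³ → ℝ be nonnegative, radial, compactly supported, with unit integral, and set φ^ε(ℓ) = ε⁻³ φ(ℓ/ε). Define v_L^ε(x) = ∫_{ℝ³} φ^ε(ℓ) (n(ℓ) ⊗ n(ℓ)) v(x + ℓ) dℓ with n(ℓ) = ℓ/‖ℓ‖. Then ‖v_L^ε - (1/3) v‖_{L^q} → 0 as ε → 0. -/

import Mathlib

open MeasureTheory
open scoped ENNReal

private lemma coord_abs_le (y : EuclideanSpace ℝ (Fin 3)) (i : Fin 3) : |y i| ≤ ‖y‖ := by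
  rw [EuclideanSpace.norm_eq]
  rw [← Real.sqrt_sq (abs_nonneg (y i))]
  apply Real.sqrt_le_sqrt
  rw [sq_abs]
  calc y i ^ 2 = ‖y i‖ ^ 2 := by rw [Real.norm_eq_abs, sq_abs]
  _ ≤ ∑ j, ‖y j‖ ^ 2 := Finset.single_le_sum (f := fun j => ‖y j‖ ^ 2) (fun j _ => sq_nonneg _) (Finset.mem_univ i)

private lemma norm_le_sum3 (y : EuclideanSpace ℝ (Fin 3)) : ‖y‖ ≤ ∑ i, |y i| := by
  rw [EuclideanSpace.norm_eq]
  have h1 : ∀ i : Fin 3, 0 ≤ |y i| := fun i => abs_nonneg _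
  have h : ∑ i, ‖y i‖ ^ 2 ≤ (∑ i, |y i|) ^ 2 := by
    simp only [Real.norm_eq_abs, Fin.sum_univ_three]
    nlinarith [h1 0, h1 1, h1 2, abs_nonneg (y 0), mul_nonneg (h1 0) (h1 1),
      mul_nonneg (h1 0) (h1 2), mul_nonneg (h1 1) (h1 2)]
  calc Real.sqrt (∑ i, ‖y i‖ ^ 2) ≤ Real.sqrt ((∑ i, |y i|) ^ 2) := Real.sqrt_le_sqrt h
  _ = ∑ i, |y i| := Real.sqrt_sq (Finset.sum_nonneg fun i _ => h1 i)

private lemma inner_sum_abs_le (ℓ w : EuclideanSpace ℝ (Fin 3)) :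
    |∑ j, ℓ j / ‖ℓ‖ * w j| ≤ ‖w‖ := by
  rcases eq_or_ne ℓ 0 with rfl | hl
  · simp [norm_nonneg]
  have h : ∑ j, ℓ j / ‖ℓ‖ * w j = (inner ℝ (‖ℓ‖⁻¹ • ℓ) w : ℝ) := by
    rw [PiLp.inner_apply]
    refine Finset.sum_congr rfl fun j _ => ?_
    simp [RCLike.inner_apply, conj_trivial, PiLp.smul_apply, smul_eq_mul, div_eq_inv_mul]
    ring
  rw [h]
  refine (abs_real_inner_le_norm _ _).trans ?_
  rw [norm_smul, norm_inv, norm_norm, inv_mul_cancel₀ (norm_ne_zero_iff.2 hl), one_mul]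

private lemma meas_coordn (i : Fin 3) :
    Measurable fun ℓ : EuclideanSpace ℝ (Fin 3) => ℓ i / ‖ℓ‖ :=
  ((EuclideanSpace.proj i).continuous.measurable).div continuous_norm.measurable

private lemma coordn_abs_le (ℓ : EuclideanSpace ℝ (Fin 3)) (i : Fin 3) : |ℓ i / ‖ℓ‖| ≤ 1 := by
  rcases eq_or_ne ℓ 0 with rfl | hl
  · simp
  rw [abs_div, abs_norm, div_le_one (norm_pos_iff.2 hl)]
  exact coord_abs_le ℓ i

private lemma holder_point {α : Type*} [MeasurableSpace α] {μ : Measure α} {q' : ℝ} (hq : 1 ≤ q')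
    (Φ D : α → ℝ≥0∞) (hΦ : AEMeasurable Φ μ) (hD : AEMeasurable D μ)
    (hΦ1 : ∫⁻ ℓ, Φ ℓ ∂μ = 1) :
    (∫⁻ ℓ, Φ ℓ * D ℓ ∂μ) ^ q' ≤ ∫⁻ ℓ, Φ ℓ * D ℓ ^ q' ∂μ := by
  rcases eq_or_lt_of_le hq with rfl | hq1
  · simp
  have hq0 : (0:ℝ) < q' := lt_trans zero_lt_one hq1
  have hpq : (Real.conjExponent q').HolderConjugate q' :=
    (Real.HolderConjugate.conjExponent hq1).symm
  set r := Real.conjExponent q' with hr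
  have hr0 : (0:ℝ) < r := hpq.pos
  have key : ∫⁻ ℓ, Φ ℓ * D ℓ ∂μ ≤ (∫⁻ ℓ, Φ ℓ * D ℓ ^ q' ∂μ) ^ (1 / q') := by
    have h := ENNReal.lintegral_mul_le_Lp_mul_Lq μ hpq
      (f := fun ℓ => Φ ℓ ^ (1/r)) (g := fun ℓ => Φ ℓ ^ (1/q') * D ℓ)
      (hΦ.pow_const _) ((hΦ.pow_const _).mul hD)
    have e1 : ∫⁻ a, ((fun ℓ => Φ ℓ ^ (1/r)) * fun ℓ => Φ ℓ ^ (1/q') * D ℓ) a ∂μ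
        = ∫⁻ ℓ, Φ ℓ * D ℓ ∂μ := by
      refine lintegral_congr fun ℓ => ?_
      have h2 : Φ ℓ ^ (1/r) * Φ ℓ ^ (1/q') = Φ ℓ := by
        rw [← ENNReal.rpow_add_of_nonneg _ _ (by positivity) (by positivity), one_div, one_div,
          hpq.inv_add_inv_eq_one, ENNReal.rpow_one]
      simp only [Pi.mul_apply, ← mul_assoc, h2]
    have e2 : ∫⁻ a, (fun ℓ => Φ ℓ ^ (1/r)) a ^ r ∂μ = 1 := by
      rw [← hΦ1]
      refine lintegral_congr fun ℓ => ?_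
      rw [← ENNReal.rpow_mul, one_div_mul_cancel hr0.ne', ENNReal.rpow_one]
    have e3 : ∫⁻ a, ((fun ℓ => Φ ℓ ^ (1/q') * D ℓ)) a ^ q' ∂μ = ∫⁻ ℓ, Φ ℓ * D ℓ ^ q' ∂μ := by
      refine lintegral_congr fun ℓ => ?_
      rw [ENNReal.mul_rpow_of_nonneg _ _ hq0.le, ← ENNReal.rpow_mul,
        one_div_mul_cancel hq0.ne', ENNReal.rpow_one]
    rw [e1, e2, e3, ENNReal.one_rpow, one_mul] at h
    exact h
  calc (∫⁻ ℓ, Φ ℓ * D ℓ ∂μ) ^ q' ≤ ((∫⁻ ℓ, Φ ℓ * D ℓ ^ q' ∂μ) ^ (1/q')) ^ q' :=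
        ENNReal.rpow_le_rpow key hq0.le
  _ = ∫⁻ ℓ, Φ ℓ * D ℓ ^ q' ∂μ := by rw [one_div, ENNReal.rpow_inv_rpow hq0.ne']

private lemma key_bound {α : Type*} [MeasurableSpace α] {μ : Measure α} [SFinite μ] {q' : ℝ}
    (hq : 1 ≤ q') (Φ : α → ℝ≥0∞) (hΦ : AEMeasurable Φ μ) (hΦ1 : ∫⁻ ℓ, Φ ℓ ∂μ = 1)
    (D : α → α → ℝ≥0∞) (hD : Measurable (Function.uncurry D)) (B : ℝ≥0∞)
    (hB : ∀ ℓ, Φ ℓ ≠ 0 → (∫⁻ x, D x ℓ ^ q' ∂μ) ≤ B) :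
    ∫⁻ x, (∫⁻ ℓ, Φ ℓ * D x ℓ ∂μ) ^ q' ∂μ ≤ B := by
  rcases eq_or_ne B ⊤ with rfl | hBfin
  · exact le_top
  have hDx : ∀ x, Measurable fun ℓ => D x ℓ := fun x => hD.comp measurable_prodMk_left
  have step1 : ∫⁻ x, (∫⁻ ℓ, Φ ℓ * D x ℓ ∂μ) ^ q' ∂μ ≤ ∫⁻ x, ∫⁻ ℓ, Φ ℓ * D x ℓ ^ q' ∂μ ∂μ :=
    lintegral_mono fun x => holder_point hq Φ (fun ℓ => D x ℓ) hΦ (hDx x).aemeasurable hΦ1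
  refine step1.trans ?_
  obtain ⟨Φ', hΦ'meas, hΦ'eq⟩ := hΦ
  have hrw : ∀ x, ∫⁻ ℓ, Φ ℓ * D x ℓ ^ q' ∂μ = ∫⁻ ℓ, Φ' ℓ * D x ℓ ^ q' ∂μ := fun x =>
    lintegral_congr_ae (hΦ'eq.mono fun ℓ h => by simp only [h])
  simp only [hrw]
  have hswap : ∫⁻ x, ∫⁻ ℓ, Φ' ℓ * D x ℓ ^ q' ∂μ ∂μ = ∫⁻ ℓ, ∫⁻ x, Φ' ℓ * D x ℓ ^ q' ∂μ ∂μ := by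
    refine lintegral_lintegral_swap ?_
    exact ((hΦ'meas.comp measurable_snd).mul
      ((hD.pow_const q').comp measurable_id)).aemeasurable
  rw [hswap]
  have hpull : ∀ ℓ, ∫⁻ x, Φ' ℓ * D x ℓ ^ q' ∂μ = Φ' ℓ * ∫⁻ x, D x ℓ ^ q' ∂μ := fun ℓ =>
    lintegral_const_mul _ ((hD.comp (measurable_prodMk_right)).pow_const q')
  simp only [hpull]
  have hB' : ∀ᵐ ℓ ∂μ, Φ' ℓ * ∫⁻ x, D x ℓ ^ q' ∂μ ≤ Φ' ℓ * B := by
    filter_upwards [hΦ'eq] with ℓ h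
    rw [← h]
    rcases eq_or_ne (Φ ℓ) 0 with h0 | h0
    · simp [h0]
    · exact mul_le_mul_right (hB ℓ h0) _
  calc ∫⁻ ℓ, Φ' ℓ * ∫⁻ x, D x ℓ ^ q' ∂μ ∂μ ≤ ∫⁻ ℓ, Φ' ℓ * B ∂μ := lintegral_mono_ae hB'
  _ = (∫⁻ ℓ, Φ' ℓ ∂μ) * B := lintegral_mul_const _ hΦ'meas
  _ = B := by rw [← lintegral_congr_ae hΦ'eq, hΦ1, one_mul]

private lemma g_meas {α : Type*} [MeasurableSpace α] {μ : Measure α} [SFinite μ]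
    (Φ : α → ℝ≥0∞) (hΦ : AEMeasurable Φ μ) (D : α → α → ℝ≥0∞)
    (hD : Measurable (Function.uncurry D)) :
    AEMeasurable (fun x => ∫⁻ ℓ, Φ ℓ * D x ℓ ∂μ) μ := by
  obtain ⟨Φ', hΦ'meas, hΦ'eq⟩ := hΦ
  have hrw : (fun x => ∫⁻ ℓ, Φ ℓ * D x ℓ ∂μ) = fun x => ∫⁻ ℓ, Φ' ℓ * D x ℓ ∂μ :=
    funext fun x => lintegral_congr_ae (hΦ'eq.mono fun ℓ h => by simp only [h])
  rw [hrw]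
  exact (Measurable.lintegral_prod_right
    (f := fun x ℓ => Φ' ℓ * D x ℓ) ((hΦ'meas.comp measurable_snd).mul hD)).aemeasurable

private lemma moment_integrable (ψ : EuclideanSpace ℝ (Fin 3) → ℝ) (hint : Integrable ψ)
    (i j : Fin 3) :
    Integrable (fun ℓ : EuclideanSpace ℝ (Fin 3) => ψ ℓ * (ℓ i / ‖ℓ‖ * (ℓ j / ‖ℓ‖))) := by
  refine Integrable.mono' hint.norm
    (hint.1.mul (((meas_coordn i).mul (meas_coordn j)).aestronglyMeasurable)) ?_
  refine Filter.Eventually.of_forall fun ℓ => ?_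
  have h1 : |ℓ i / ‖ℓ‖ * (ℓ j / ‖ℓ‖)| ≤ 1 := by
    rw [abs_mul]
    have hi := coordn_abs_le ℓ i
    have hj := coordn_abs_le ℓ j
    nlinarith [abs_nonneg (ℓ i / ‖ℓ‖), abs_nonneg (ℓ j / ‖ℓ‖)]
  rw [norm_mul, Real.norm_eq_abs (ℓ i / ‖ℓ‖ * (ℓ j / ‖ℓ‖))]
  calc ‖ψ ℓ‖ * |ℓ i / ‖ℓ‖ * (ℓ j / ‖ℓ‖)| ≤ ‖ψ ℓ‖ * 1 :=
        mul_le_mul_of_nonneg_left h1 (norm_nonneg _)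
  _ = ‖ψ ℓ‖ := mul_one _

private lemma moment (ψ : EuclideanSpace ℝ (Fin 3) → ℝ) (hint : Integrable ψ)
    (hrad : ∀ a b : EuclideanSpace ℝ (Fin 3), ‖a‖ = ‖b‖ → ψ a = ψ b) (i j : Fin 3) :
    ∫ ℓ, ψ ℓ * (ℓ i / ‖ℓ‖ * (ℓ j / ‖ℓ‖)) =
      if i = j then 3⁻¹ * ∫ ℓ, ψ ℓ else 0 := by
  rcases eq_or_ne i j with rfl | hij
  · rw [if_pos rfl]
    have heq : ∀ k k' : Fin 3, (∫ ℓ, ψ ℓ * (ℓ k / ‖ℓ‖ * (ℓ k / ‖ℓ‖)))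
        = ∫ ℓ, ψ ℓ * (ℓ k' / ‖ℓ‖ * (ℓ k' / ‖ℓ‖)) := by
      intro k k'
      set e : EuclideanSpace ℝ (Fin 3) ≃ₗᵢ[ℝ] EuclideanSpace ℝ (Fin 3) :=
        LinearIsometryEquiv.piLpCongrLeft 2 ℝ ℝ (Equiv.swap k k') with he
      have happ : ∀ (ℓ : EuclideanSpace ℝ (Fin 3)) (m : Fin 3), e ℓ m = ℓ (Equiv.swap k k' m) := by
        intro ℓ m
        simp [he, LinearIsometryEquiv.piLpCongrLeft_apply, Equiv.piCongrLeft'_apply,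
          Equiv.symm_swap]
      have h := (e.measurePreserving).integral_comp
        (e.toHomeomorph.toMeasurableEquiv.measurableEmbedding)
        (fun ℓ => ψ ℓ * (ℓ k / ‖ℓ‖ * (ℓ k / ‖ℓ‖)))
      rw [← h]
      refine integral_congr_ae (Filter.Eventually.of_forall fun ℓ => ?_)
      have hnorm : ‖e ℓ‖ = ‖ℓ‖ := e.norm_map ℓ
      show ψ (e ℓ) * (e ℓ k / ‖e ℓ‖ * (e ℓ k / ‖e ℓ‖)) = ψ ℓ * (ℓ k' / ‖ℓ‖ * (ℓ k' / ‖ℓ‖))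
      rw [hrad (e ℓ) ℓ hnorm, hnorm, happ ℓ k, Equiv.swap_apply_left]
    have hsum : (∑ k : Fin 3, ∫ ℓ, ψ ℓ * (ℓ k / ‖ℓ‖ * (ℓ k / ‖ℓ‖))) = ∫ ℓ, ψ ℓ := by
      rw [← integral_finset_sum _ (fun k _ => moment_integrable ψ hint k k)]
      refine integral_congr_ae ?_
      have h0 : ∀ᵐ ℓ : EuclideanSpace ℝ (Fin 3), ℓ ≠ 0 := by
        rw [ae_iff]
        have hset : {a : EuclideanSpace ℝ (Fin 3) | ¬ a ≠ 0}
            = {(0 : EuclideanSpace ℝ (Fin 3))} := by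
          ext a; simp
        rw [hset]
        exact measure_singleton 0
      filter_upwards [h0] with ℓ hℓ
      have hn : ‖ℓ‖ ≠ 0 := norm_ne_zero_iff.2 hℓ
      have hone : (∑ k : Fin 3, ℓ k / ‖ℓ‖ * (ℓ k / ‖ℓ‖)) = 1 := by
        have hrw : ∀ k : Fin 3, ℓ k / ‖ℓ‖ * (ℓ k / ‖ℓ‖) = ℓ k ^ 2 / ‖ℓ‖ ^ 2 := fun k => by
          rw [div_mul_div_comm, sq, sq]
        simp only [hrw]
        rw [← Finset.sum_div]
        rw [div_eq_one_iff_eq (by positivity)]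
        rw [EuclideanSpace.norm_eq, Real.sq_sqrt (by positivity)]
        refine Finset.sum_congr rfl fun k _ => ?_
        rw [Real.norm_eq_abs, sq_abs]
      rw [← Finset.mul_sum, hone, mul_one]
    have h3 : (3 : ℝ) * ∫ ℓ, ψ ℓ * (ℓ i / ‖ℓ‖ * (ℓ i / ‖ℓ‖)) = ∫ ℓ, ψ ℓ := by
      rw [← hsum, Fin.sum_univ_three]
      rw [heq 0 i, heq 1 i, heq 2 i]; ring
    linarith [h3]
  · rw [if_neg hij]
    set e : EuclideanSpace ℝ (Fin 3) ≃ₗᵢ[ℝ] EuclideanSpace ℝ (Fin 3) :=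
      LinearIsometryEquiv.piLpCongrRight 2
        (fun k : Fin 3 => if k = i then LinearIsometryEquiv.neg ℝ else
          LinearIsometryEquiv.refl ℝ ℝ) with he
    have happ : ∀ (ℓ : EuclideanSpace ℝ (Fin 3)) (m : Fin 3),
        e ℓ m = if m = i then -(ℓ m) else ℓ m := by
      intro ℓ m
      simp only [he, LinearIsometryEquiv.piLpCongrRight_apply, PiLp.toLp_apply]
      by_cases hm : m = i <;> simp [hm]
    have hkey := (e.measurePreserving).integral_comp
      (e.toHomeomorph.toMeasurableEquiv.measurableEmbedding)
      (fun ℓ => ψ ℓ * (ℓ i / ‖ℓ‖ * (ℓ j / ‖ℓ‖)))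
    have hneg : (∫ ℓ, ψ ℓ * (ℓ i / ‖ℓ‖ * (ℓ j / ‖ℓ‖)))
        = - ∫ ℓ, ψ ℓ * (ℓ i / ‖ℓ‖ * (ℓ j / ‖ℓ‖)) := by
      conv_lhs => rw [← hkey]
      rw [← integral_neg]
      refine integral_congr_ae (Filter.Eventually.of_forall fun ℓ => ?_)
      have hnorm : ‖e ℓ‖ = ‖ℓ‖ := e.norm_map ℓ
      show ψ (e ℓ) * (e ℓ i / ‖e ℓ‖ * (e ℓ j / ‖e ℓ‖)) = -(ψ ℓ * (ℓ i / ‖ℓ‖ * (ℓ j / ‖ℓ‖)))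
      rw [hrad (e ℓ) ℓ hnorm, hnorm, happ ℓ i, happ ℓ j, if_pos rfl, if_neg (Ne.symm hij)]
      ring
    linarith [hneg]

set_option maxHeartbeats 2000000 in
/-- Mollified longitudinal average converges to (1/3)v in L^q. -/
theorem mollified_longitudinal_converges (q : ℝ≥0∞) (hq1 : 1 ≤ q) (hq2 : q ≠ ⊤)
    (v : EuclideanSpace ℝ (Fin 3) → EuclideanSpace ℝ (Fin 3)) (hv : MemLp v q)
    (φ : EuclideanSpace ℝ (Fin 3) → ℝ) (hφpos : ∀ ℓ, 0 ≤ φ ℓ)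
    (hφrad : ∀ ℓ ℓ' : EuclideanSpace ℝ (Fin 3), ‖ℓ‖ = ‖ℓ'‖ → φ ℓ = φ ℓ')
    (hφsupp : HasCompactSupport φ) (hφint : (∫ ℓ, φ ℓ) = 1) :
    Filter.Tendsto
      (fun ε : ℝ =>
        eLpNorm (fun x =>
          ((EuclideanSpace.equiv (Fin 3) ℝ).symm fun i =>
            ∫ ℓ : EuclideanSpace ℝ (Fin 3),
              (ε ^ 3)⁻¹ * φ (ε⁻¹ • ℓ) * ((ℓ i / ‖ℓ‖) * ∑ j, (ℓ j / ‖ℓ‖) * v (x + ℓ) j))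
          - (3 : ℝ)⁻¹ • v x) q volume)
      (nhdsWithin 0 (Set.Ioi 0)) (nhds 0) := by
  classical
  haveI : Fact (1 ≤ q) := ⟨hq1⟩
  have hq0 : q ≠ 0 := (lt_of_lt_of_le zero_lt_one hq1).ne'
  set q' : ℝ := q.toReal with hq'def
  have hq'1 : 1 ≤ q' := by
    rw [hq'def, ← ENNReal.toReal_one]
    exact ENNReal.toReal_mono hq2 hq1
  have hq'0 : (0:ℝ) < q' := lt_of_lt_of_le zero_lt_one hq'1
  -- reduce to a strongly measurable representative
  obtain ⟨w, hwsm, hvw⟩ := hv.1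
  have hwLp : MemLp w q volume := hv.ae_eq hvw
  have htrans_ae : ∀ x : EuclideanSpace ℝ (Fin 3),
      ∀ᵐ ℓ : EuclideanSpace ℝ (Fin 3), v (x + ℓ) = w (x + ℓ) := by
    intro x
    have hqmp : Measure.QuasiMeasurePreserving (fun ℓ : EuclideanSpace ℝ (Fin 3) => x + ℓ)
        volume volume := (measurePreserving_add_left volume x).quasiMeasurePreserving
    exact hvw.comp_tendsto hqmp.tendsto_ae
  suffices htgt : Filter.Tendsto
      (fun ε : ℝ =>
        eLpNorm (fun x =>
          ((EuclideanSpace.equiv (Fin 3) ℝ).symm fun i =>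
            ∫ ℓ : EuclideanSpace ℝ (Fin 3),
              (ε ^ 3)⁻¹ * φ (ε⁻¹ • ℓ) * ((ℓ i / ‖ℓ‖) * ∑ j, (ℓ j / ‖ℓ‖) * w (x + ℓ) j))
          - (3 : ℝ)⁻¹ • w x) q volume)
      (nhdsWithin 0 (Set.Ioi 0)) (nhds 0) by
    refine htgt.congr fun ε => ?_
    refine (eLpNorm_congr_ae ?_)
    filter_upwards [hvw] with x hx
    have hints : (fun i => ∫ ℓ : EuclideanSpace ℝ (Fin 3),
          (ε ^ 3)⁻¹ * φ (ε⁻¹ • ℓ) * ((ℓ i / ‖ℓ‖) * ∑ j, (ℓ j / ‖ℓ‖) * w (x + ℓ) j))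
        = (fun i => ∫ ℓ : EuclideanSpace ℝ (Fin 3),
          (ε ^ 3)⁻¹ * φ (ε⁻¹ • ℓ) * ((ℓ i / ‖ℓ‖) * ∑ j, (ℓ j / ‖ℓ‖) * v (x + ℓ) j)) := by
      funext i
      refine integral_congr_ae ?_
      filter_upwards [htrans_ae x] with ℓ hℓ
      rw [hℓ]
    rw [hints, hx]
  clear htrans_ae hvw hv v
  -- basic facts about φ
  have hφInt : Integrable φ := by
    by_contra h
    rw [integral_undef h] at hφint
    exact one_ne_zero hφint.symm
  obtain ⟨R0, hR0⟩ := hφsupp.isCompact.isBounded.subset_closedBall (0 : EuclideanSpace ℝ (Fin 3))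
  set R : ℝ := max R0 1 with hRdef
  have hR1 : (0:ℝ) < R := lt_of_lt_of_le zero_lt_one (le_max_right _ _)
  have hRsub : tsupport φ ⊆ Metric.closedBall 0 R :=
    hR0.trans (Metric.closedBall_subset_closedBall (le_max_left _ _))
  -- translation continuity in L^q
  have trans_cont : ∀ t : ℝ, 0 < t → ∃ r > 0, ∀ ℓ : EuclideanSpace ℝ (Fin 3), ‖ℓ‖ < r →
      eLpNorm (fun x => w (x + ℓ) - w x) q volume ≤ ENNReal.ofReal t := by
    intro t ht
    set vLp : Lp (EuclideanSpace ℝ (Fin 3)) q volume := hwLp.toLp w with hvLp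
    set T : C(EuclideanSpace ℝ (Fin 3) × EuclideanSpace ℝ (Fin 3), EuclideanSpace ℝ (Fin 3)) :=
      ⟨fun p => p.2 + p.1, by fun_prop⟩ with hT
    set Tc : C(EuclideanSpace ℝ (Fin 3), C(EuclideanSpace ℝ (Fin 3), EuclideanSpace ℝ (Fin 3))) :=
      T.curry with hTc
    have hTapp : ∀ ℓ x : EuclideanSpace ℝ (Fin 3), Tc ℓ x = x + ℓ := fun ℓ x => rfl
    have hmp : ∀ ℓ : EuclideanSpace ℝ (Fin 3),
        MeasurePreserving (Tc ℓ) volume volume := fun ℓ => by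
      have : MeasurePreserving (fun x : EuclideanSpace ℝ (Fin 3) => x + ℓ) volume volume :=
        measurePreserving_add_right volume ℓ
      exact this
    set c : EuclideanSpace ℝ (Fin 3) → Lp (EuclideanSpace ℝ (Fin 3)) q volume :=
      fun ℓ => Lp.compMeasurePreserving (Tc ℓ) (hmp ℓ) vLp with hc
    have hcont : Continuous c :=
      Continuous.compMeasurePreservingLp continuous_const Tc.continuous hmp hq2
    have hcoe : ∀ ℓ : EuclideanSpace ℝ (Fin 3),
        (c ℓ : EuclideanSpace ℝ (Fin 3) → EuclideanSpace ℝ (Fin 3))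
          =ᵐ[volume] fun x => w (x + ℓ) := by
      intro ℓ
      have h1 := Lp.coeFn_compMeasurePreserving vLp (hmp ℓ)
      have h2 : w ∘ (Tc ℓ) =ᵐ[volume]
          ((vLp : EuclideanSpace ℝ (Fin 3) → EuclideanSpace ℝ (Fin 3)) ∘ (Tc ℓ)) := by
        have h3 := hwLp.coeFn_toLp
        exact (h3.symm).comp_tendsto ((hmp ℓ).quasiMeasurePreserving.tendsto_ae)
      exact (h1.trans h2.symm)
    have hc0 : ∀ᵐ x ∂(volume : Measure (EuclideanSpace ℝ (Fin 3))),
        (c 0 : EuclideanSpace ℝ (Fin 3) → EuclideanSpace ℝ (Fin 3)) x = w x := by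
      filter_upwards [hcoe 0] with x hx
      rw [hx, add_zero]
    have htend : Filter.Tendsto c (nhds 0) (nhds (c 0)) := hcont.tendsto 0
    have hev : ∀ᶠ ℓ in nhds (0 : EuclideanSpace ℝ (Fin 3)), dist (c ℓ) (c 0) < t :=
      htend (Metric.ball_mem_nhds _ ht)
    rw [Metric.eventually_nhds_iff] at hev
    obtain ⟨r, hr0, hr⟩ := hev
    refine ⟨r, hr0, fun ℓ hℓ => ?_⟩
    have hdist := hr (y := ℓ) (by rwa [dist_zero_right])
    have heq : eLpNorm (fun x => w (x + ℓ) - w x) q volume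
        = eLpNorm ((c ℓ : EuclideanSpace ℝ (Fin 3) → EuclideanSpace ℝ (Fin 3))
            - (c 0 : EuclideanSpace ℝ (Fin 3) → EuclideanSpace ℝ (Fin 3))) q volume := by
      refine eLpNorm_congr_ae ?_
      filter_upwards [hcoe ℓ, hc0] with x h1 h2
      simp only [Pi.sub_apply, h1, h2]
    rw [heq]
    have hsub : eLpNorm ((c ℓ : EuclideanSpace ℝ (Fin 3) → EuclideanSpace ℝ (Fin 3))
            - (c 0 : EuclideanSpace ℝ (Fin 3) → EuclideanSpace ℝ (Fin 3))) q volume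
        = ENNReal.ofReal ‖c ℓ - c 0‖ := by
      rw [Lp.norm_def]
      rw [ENNReal.ofReal_toReal (Lp.eLpNorm_ne_top _)]
      exact (eLpNorm_congr_ae (Lp.coeFn_sub (c ℓ) (c 0))).symm
    rw [hsub]
    rw [← dist_eq_norm]
    exact ENNReal.ofReal_le_ofReal hdist.le

  rw [ENNReal.tendsto_nhds_zero]
  intro η hη
  set δ : ℝ≥0∞ := min (η / 3) 1 with hδdef
  have hδ0 : δ ≠ 0 := by
    have h1 : η / 3 ≠ 0 := by
      simp only [ne_eq, ENNReal.div_eq_zero_iff]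
      push_neg
      exact ⟨hη.ne', by norm_num⟩
    simp only [hδdef, ne_eq, min_eq_iff, not_or]
    constructor
    · rintro ⟨h, -⟩; exact h1 h
    · rintro ⟨h, -⟩; exact one_ne_zero h
  have hδtop : δ ≠ ⊤ := by
    simp [hδdef]
  set t : ℝ := δ.toReal with htdef
  have ht0 : 0 < t := ENNReal.toReal_pos hδ0 hδtop
  have hofr : ENNReal.ofReal t = δ := ENNReal.ofReal_toReal hδtop
  obtain ⟨r, hr0, hrprop⟩ := trans_cont t ht0
  have hmem : Set.Ioo (0:ℝ) (r / R) ∈ nhdsWithin (0:ℝ) (Set.Ioi 0) :=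
    Ioo_mem_nhdsGT_of_mem ⟨le_refl 0, by positivity⟩
  filter_upwards [hmem] with ε hε
  obtain ⟨hε0, hεr⟩ := hε
  -- the rescaled mollifier
  set ψ : EuclideanSpace ℝ (Fin 3) → ℝ := fun ℓ => (ε ^ 3)⁻¹ * φ (ε⁻¹ • ℓ) with hψdef
  have hψnn : ∀ ℓ, 0 ≤ ψ ℓ := fun ℓ => mul_nonneg (by positivity) (hφpos _)
  have hψint : Integrable ψ :=
    (hφInt.comp_smul (inv_ne_zero hε0.ne')).const_mul _
  have hψrad : ∀ a b : EuclideanSpace ℝ (Fin 3), ‖a‖ = ‖b‖ → ψ a = ψ b := by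
    intro a b hab
    simp only [hψdef]
    congr 1
    exact hφrad _ _ (by rw [norm_smul, norm_smul, hab])
  have hψ1 : ∫ ℓ, ψ ℓ = 1 := by
    simp only [hψdef]
    rw [integral_const_mul, Measure.integral_comp_inv_smul_of_nonneg volume φ hε0.le,
      finrank_euclideanSpace_fin, hφint, smul_eq_mul, mul_one]
    exact inv_mul_cancel₀ (pow_ne_zero 3 hε0.ne')
  set Φ : EuclideanSpace ℝ (Fin 3) → ℝ≥0∞ := fun ℓ => ENNReal.ofReal (ψ ℓ) with hΦdef
  have hΦae : AEMeasurable Φ volume :=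
    ENNReal.measurable_ofReal.comp_aemeasurable hψint.1.aemeasurable
  have hΦ1 : ∫⁻ ℓ, Φ ℓ = 1 := by
    rw [hΦdef, ← ofReal_integral_eq_lintegral_ofReal hψint (Filter.Eventually.of_forall hψnn),
      hψ1, ENNReal.ofReal_one]
  have hΦsupp : ∀ ℓ, Φ ℓ ≠ 0 → ‖ℓ‖ < r := by
    intro ℓ h
    have hψne : ψ ℓ ≠ 0 := by
      intro h0
      apply h
      simp [hΦdef, h0]
    have hφne : φ (ε⁻¹ • ℓ) ≠ 0 := by
      intro h0
      apply hψne
      simp [hψdef, h0]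
    have hmem : ε⁻¹ • ℓ ∈ tsupport φ := subset_tsupport φ hφne
    have hball := hRsub hmem
    rw [Metric.mem_closedBall, dist_zero_right, norm_smul, norm_inv, Real.norm_eq_abs,
      abs_of_pos hε0] at hball
    have : ‖ℓ‖ ≤ ε * R := by
      rw [← inv_mul_le_iff₀ hε0] at *
      exact hball
    calc ‖ℓ‖ ≤ ε * R := this
    _ < (r / R) * R := by gcongr
    _ = r := div_mul_cancel₀ r hR1.ne'
  have hwmeas : Measurable w := hwsm.measurable
  -- difference kernel
  set D : EuclideanSpace ℝ (Fin 3) → EuclideanSpace ℝ (Fin 3) → ℝ≥0∞ :=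
    fun x ℓ => (‖w (x + ℓ) - w x‖₊ : ℝ≥0∞) with hDdef
  have hD : Measurable (Function.uncurry D) := by
    apply Measurable.coe_nnreal_ennreal
    apply Measurable.nnnorm
    exact (hwmeas.comp (measurable_fst.add measurable_snd)).sub (hwmeas.comp measurable_fst)
  set D0 : EuclideanSpace ℝ (Fin 3) → EuclideanSpace ℝ (Fin 3) → ℝ≥0∞ :=
    fun x ℓ => (‖w (x + ℓ)‖₊ : ℝ≥0∞) with hD0def
  have hD0 : Measurable (Function.uncurry D0) :=
    (Measurable.nnnorm (hwmeas.comp (measurable_fst.add measurable_snd))).coe_nnreal_ennreal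
  -- a.e. finiteness of the dominating integral
  have hwq : ∀ ℓ : EuclideanSpace ℝ (Fin 3),
      ∫⁻ x, (‖w (x + ℓ)‖₊ : ℝ≥0∞) ^ q' = ∫⁻ x, (‖w x‖₊ : ℝ≥0∞) ^ q' := fun ℓ =>
    (measurePreserving_add_right volume ℓ).lintegral_comp (hwmeas.nnnorm.coe_nnreal_ennreal.pow_const q')
  have hwfin : ∫⁻ x, (‖w x‖₊ : ℝ≥0∞) ^ q' < ⊤ := by
    have h := hwLp.2
    rw [eLpNorm_eq_lintegral_rpow_enorm_toReal hq0 hq2] at h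
    have := ENNReal.rpow_lt_top_of_nonneg (y := q')
      (x := (∫⁻ x, (‖w x‖₊ : ℝ≥0∞) ^ q.toReal) ^ (1 / q.toReal)) hq'0.le (h.ne)
    rwa [one_div, ENNReal.rpow_inv_rpow (by rw [hq'def] at hq'0; exact hq'0.ne')] at this
  have hgfin : ∀ᵐ x : EuclideanSpace ℝ (Fin 3), (∫⁻ ℓ, Φ ℓ * D0 x ℓ) < ⊤ := by
    have hkb := key_bound hq'1 Φ hΦae hΦ1 D0 hD0 (∫⁻ x, (‖w x‖₊ : ℝ≥0∞) ^ q')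
      (fun ℓ _ => le_of_eq (hwq ℓ))
    have hmeas := g_meas Φ hΦae D0 hD0
    have hfin : ∫⁻ x, (∫⁻ ℓ, Φ ℓ * D0 x ℓ) ^ q' < ⊤ := lt_of_le_of_lt hkb hwfin
    have := ae_lt_top' (hmeas.pow_const q') hfin.ne
    filter_upwards [this] with x hx
    exact (ENNReal.rpow_lt_top_iff_of_pos hq'0).mp hx
  -- pointwise bound
  have hpt : ∀ᵐ x : EuclideanSpace ℝ (Fin 3),
      (‖((EuclideanSpace.equiv (Fin 3) ℝ).symm fun i =>
            ∫ ℓ : EuclideanSpace ℝ (Fin 3),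
              (ε ^ 3)⁻¹ * φ (ε⁻¹ • ℓ) * ((ℓ i / ‖ℓ‖) * ∑ j, (ℓ j / ‖ℓ‖) * w (x + ℓ) j))
          - (3 : ℝ)⁻¹ • w x‖₊ : ℝ≥0∞) ≤ 3 * ∫⁻ ℓ, Φ ℓ * D x ℓ := by
    filter_upwards [hgfin] with x hx
    have hψeq : ∀ (ℓ : EuclideanSpace ℝ (Fin 3)) (X : ℝ),
        (ε ^ 3)⁻¹ * φ (ε⁻¹ • ℓ) * X = ψ ℓ * X := fun _ _ => rfl
    have hwx_meas : Measurable fun ℓ : EuclideanSpace ℝ (Fin 3) => w (x + ℓ) :=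
      hwmeas.comp (measurable_id.const_add x)
    have hdom : Integrable (fun ℓ => ψ ℓ * ‖w (x + ℓ)‖) := by
      refine ⟨hψint.1.mul (hwx_meas.norm.aestronglyMeasurable), ?_⟩
      rw [HasFiniteIntegral]
      have hrw : ∀ ℓ : EuclideanSpace ℝ (Fin 3),
          (‖ψ ℓ * ‖w (x + ℓ)‖‖₊ : ℝ≥0∞) = Φ ℓ * D0 x ℓ := by
        intro ℓ
        rw [nnnorm_mul, ENNReal.coe_mul, nnnorm_norm]
        congr 1
        exact Real.enorm_eq_ofReal (hψnn ℓ)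
      simp only [enorm_eq_nnnorm, hrw]
      exact hx
    have habs : ∀ (i : Fin 3) (ℓ u : EuclideanSpace ℝ (Fin 3)),
        |ψ ℓ * ((ℓ i / ‖ℓ‖) * ∑ j, (ℓ j / ‖ℓ‖) * u j)| ≤ ψ ℓ * ‖u‖ := by
      intro i ℓ u
      rw [abs_mul, abs_of_nonneg (hψnn ℓ), abs_mul]
      refine mul_le_mul_of_nonneg_left ?_ (hψnn ℓ)
      calc |ℓ i / ‖ℓ‖| * |∑ j, ℓ j / ‖ℓ‖ * u j| ≤ 1 * ‖u‖ :=
            mul_le_mul (coordn_abs_le ℓ i) (inner_sum_abs_le ℓ u) (abs_nonneg _) zero_le_one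
      _ = ‖u‖ := one_mul _
    have hsummeas : ∀ u : EuclideanSpace ℝ (Fin 3) → EuclideanSpace ℝ (Fin 3),
        Measurable u → Measurable fun ℓ => ∑ j, (ℓ j / ‖ℓ‖) * u ℓ j := by
      intro u hu
      refine Finset.measurable_sum _ fun j _ => (meas_coordn j).mul ?_
      exact ((EuclideanSpace.proj j).continuous.measurable).comp hu
    have hI1 : ∀ i, Integrable
        (fun ℓ => ψ ℓ * ((ℓ i / ‖ℓ‖) * ∑ j, (ℓ j / ‖ℓ‖) * w (x + ℓ) j)) := by
      intro i
      refine hdom.mono' (hψint.1.mul ((meas_coordn i).mul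
        (hsummeas _ hwx_meas)).aestronglyMeasurable)
        (Filter.Eventually.of_forall fun ℓ => ?_)
      rw [Real.norm_eq_abs]
      exact habs i ℓ (w (x + ℓ))
    have hI2 : ∀ i, Integrable
        (fun ℓ => ψ ℓ * ((ℓ i / ‖ℓ‖) * ∑ j, (ℓ j / ‖ℓ‖) * w x j)) := by
      intro i
      refine (hψint.mul_const ‖w x‖).mono' (hψint.1.mul ((meas_coordn i).mul
        (hsummeas _ measurable_const)).aestronglyMeasurable)
        (Filter.Eventually.of_forall fun ℓ => ?_)
      rw [Real.norm_eq_abs]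
      exact habs i ℓ (w x)
    have hmom : ∀ i, ∫ ℓ, ψ ℓ * ((ℓ i / ‖ℓ‖) * ∑ j, (ℓ j / ‖ℓ‖) * w x j)
        = 3⁻¹ * w x i := by
      intro i
      have hexp : ∀ ℓ : EuclideanSpace ℝ (Fin 3),
          ψ ℓ * ((ℓ i / ‖ℓ‖) * ∑ j, (ℓ j / ‖ℓ‖) * w x j)
          = ∑ j, ψ ℓ * (ℓ i / ‖ℓ‖ * (ℓ j / ‖ℓ‖)) * w x j := by
        intro ℓ
        simp only [Finset.mul_sum]
        exact Finset.sum_congr rfl fun j _ => by ring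
      simp only [hexp]
      rw [integral_finset_sum _ (fun j _ => (moment_integrable ψ hψint i j).mul_const _)]
      have hterm : ∀ j : Fin 3, ∫ ℓ, ψ ℓ * (ℓ i / ‖ℓ‖ * (ℓ j / ‖ℓ‖)) * w x j
          = (if i = j then 3⁻¹ else 0) * w x j := by
        intro j
        rw [integral_mul_const, moment ψ hψint hψrad i j, hψ1]
        by_cases h : i = j <;> simp [h]
      simp only [hterm]
      simp only [ite_mul, zero_mul]
      rw [Finset.sum_ite_eq]
      simp
    have hdiff : ∀ i, (∫ ℓ, ψ ℓ * ((ℓ i / ‖ℓ‖) * ∑ j, (ℓ j / ‖ℓ‖) * w (x + ℓ) j))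
          - 3⁻¹ * w x i
        = ∫ ℓ, ψ ℓ * ((ℓ i / ‖ℓ‖) * ∑ j, (ℓ j / ‖ℓ‖) * (w (x + ℓ) - w x) j) := by
      intro i
      rw [← hmom i, ← integral_sub (hI1 i) (hI2 i)]
      refine integral_congr_ae (Filter.Eventually.of_forall fun ℓ => ?_)
      show ψ ℓ * ((ℓ i / ‖ℓ‖) * ∑ j, (ℓ j / ‖ℓ‖) * w (x + ℓ) j)
          - ψ ℓ * ((ℓ i / ‖ℓ‖) * ∑ j, (ℓ j / ‖ℓ‖) * w x j)
          = ψ ℓ * ((ℓ i / ‖ℓ‖) * ∑ j, (ℓ j / ‖ℓ‖) * (w (x + ℓ) - w x) j)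
      have hsub : ∀ j : Fin 3, (w (x + ℓ) - w x) j = w (x + ℓ) j - w x j := fun j => rfl
      simp only [hsub]
      have hs : (∑ j, ℓ j / ‖ℓ‖ * (w (x + ℓ) j - w x j))
          = (∑ j, ℓ j / ‖ℓ‖ * w (x + ℓ) j) - ∑ j, ℓ j / ‖ℓ‖ * w x j := by
        rw [← Finset.sum_sub_distrib]
        exact Finset.sum_congr rfl fun j _ => by ring
      rw [hs]
      ring
    have hyi : ∀ i, (((EuclideanSpace.equiv (Fin 3) ℝ).symm fun i =>
          ∫ ℓ : EuclideanSpace ℝ (Fin 3),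
            (ε ^ 3)⁻¹ * φ (ε⁻¹ • ℓ) * ((ℓ i / ‖ℓ‖) * ∑ j, (ℓ j / ‖ℓ‖) * w (x + ℓ) j))
          - (3 : ℝ)⁻¹ • w x) i
        = ∫ ℓ, ψ ℓ * ((ℓ i / ‖ℓ‖) * ∑ j, (ℓ j / ‖ℓ‖) * (w (x + ℓ) - w x) j) := by
      intro i
      have h1 : (((EuclideanSpace.equiv (Fin 3) ℝ).symm fun i =>
          ∫ ℓ : EuclideanSpace ℝ (Fin 3),
            (ε ^ 3)⁻¹ * φ (ε⁻¹ • ℓ) * ((ℓ i / ‖ℓ‖) * ∑ j, (ℓ j / ‖ℓ‖) * w (x + ℓ) j))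
          - (3 : ℝ)⁻¹ • w x) i
          = (∫ ℓ : EuclideanSpace ℝ (Fin 3),
            (ε ^ 3)⁻¹ * φ (ε⁻¹ • ℓ) * ((ℓ i / ‖ℓ‖) * ∑ j, (ℓ j / ‖ℓ‖) * w (x + ℓ) j))
            - 3⁻¹ * w x i := by
        simp [PiLp.sub_apply, PiLp.smul_apply, smul_eq_mul, PiLp.toLp_apply]
      rw [h1]
      simp only [hψeq]
      exact hdiff i
    have hcoord : ∀ i, ENNReal.ofReal
        |(((EuclideanSpace.equiv (Fin 3) ℝ).symm fun i =>
          ∫ ℓ : EuclideanSpace ℝ (Fin 3),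
            (ε ^ 3)⁻¹ * φ (ε⁻¹ • ℓ) * ((ℓ i / ‖ℓ‖) * ∑ j, (ℓ j / ‖ℓ‖) * w (x + ℓ) j))
          - (3 : ℝ)⁻¹ • w x) i|
        ≤ ∫⁻ ℓ, Φ ℓ * D x ℓ := by
      intro i
      rw [hyi i, ← Real.enorm_eq_ofReal_abs]
      refine (enorm_integral_le_lintegral_enorm _).trans ?_
      refine lintegral_mono fun ℓ => ?_
      rw [Real.enorm_eq_ofReal_abs]
      calc ENNReal.ofReal |ψ ℓ * ((ℓ i / ‖ℓ‖) * ∑ j, (ℓ j / ‖ℓ‖) * (w (x + ℓ) - w x) j)|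
          ≤ ENNReal.ofReal (ψ ℓ * ‖w (x + ℓ) - w x‖) :=
            ENNReal.ofReal_le_ofReal (habs i ℓ (w (x + ℓ) - w x))
      _ = Φ ℓ * D x ℓ := by
          rw [ENNReal.ofReal_mul (hψnn ℓ)]
          congr 1
          exact ofReal_norm_eq_enorm _
    calc (‖((EuclideanSpace.equiv (Fin 3) ℝ).symm fun i =>
          ∫ ℓ : EuclideanSpace ℝ (Fin 3),
            (ε ^ 3)⁻¹ * φ (ε⁻¹ • ℓ) * ((ℓ i / ‖ℓ‖) * ∑ j, (ℓ j / ‖ℓ‖) * w (x + ℓ) j))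
          - (3 : ℝ)⁻¹ • w x‖₊ : ℝ≥0∞)
        = ENNReal.ofReal ‖((EuclideanSpace.equiv (Fin 3) ℝ).symm fun i =>
          ∫ ℓ : EuclideanSpace ℝ (Fin 3),
            (ε ^ 3)⁻¹ * φ (ε⁻¹ • ℓ) * ((ℓ i / ‖ℓ‖) * ∑ j, (ℓ j / ‖ℓ‖) * w (x + ℓ) j))
          - (3 : ℝ)⁻¹ • w x‖ := (ofReal_norm_eq_enorm _).symm
    _ ≤ ENNReal.ofReal (∑ i, |(((EuclideanSpace.equiv (Fin 3) ℝ).symm fun i =>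
          ∫ ℓ : EuclideanSpace ℝ (Fin 3),
            (ε ^ 3)⁻¹ * φ (ε⁻¹ • ℓ) * ((ℓ i / ‖ℓ‖) * ∑ j, (ℓ j / ‖ℓ‖) * w (x + ℓ) j))
          - (3 : ℝ)⁻¹ • w x) i|) := ENNReal.ofReal_le_ofReal (norm_le_sum3 _)
    _ = ∑ i, ENNReal.ofReal |(((EuclideanSpace.equiv (Fin 3) ℝ).symm fun i =>
          ∫ ℓ : EuclideanSpace ℝ (Fin 3),
            (ε ^ 3)⁻¹ * φ (ε⁻¹ • ℓ) * ((ℓ i / ‖ℓ‖) * ∑ j, (ℓ j / ‖ℓ‖) * w (x + ℓ) j))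
          - (3 : ℝ)⁻¹ • w x) i| :=
        ENNReal.ofReal_sum_of_nonneg (fun i _ => abs_nonneg _)
    _ ≤ ∑ _i : Fin 3, ∫⁻ ℓ, Φ ℓ * D x ℓ := Finset.sum_le_sum fun i _ => hcoord i
    _ = 3 * ∫⁻ ℓ, Φ ℓ * D x ℓ := by
        rw [Finset.sum_const, Finset.card_univ, Fintype.card_fin, nsmul_eq_mul]
        norm_num

  -- conclusion
  have hDbound : ∀ ℓ, Φ ℓ ≠ 0 → ∫⁻ x, D x ℓ ^ q' ≤ δ ^ q' := by
    intro ℓ h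
    have h1 := hrprop ℓ (hΦsupp ℓ h)
    rw [hofr] at h1
    have h2 : ∫⁻ x, D x ℓ ^ q'
        = (eLpNorm (fun x => w (x + ℓ) - w x) q volume) ^ q' := by
      rw [eLpNorm_eq_lintegral_rpow_enorm_toReal hq0 hq2, one_div,
        ENNReal.rpow_inv_rpow (by rw [hq'def] at hq'0; exact hq'0.ne')]
      rfl
    rw [h2]
    exact ENNReal.rpow_le_rpow h1 hq'0.le
  have hmain := key_bound hq'1 Φ hΦae hΦ1 D hD (δ ^ q') hDbound
  calc eLpNorm (fun x =>
          ((EuclideanSpace.equiv (Fin 3) ℝ).symm fun i =>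
            ∫ ℓ : EuclideanSpace ℝ (Fin 3),
              (ε ^ 3)⁻¹ * φ (ε⁻¹ • ℓ) * ((ℓ i / ‖ℓ‖) * ∑ j, (ℓ j / ‖ℓ‖) * w (x + ℓ) j))
          - (3 : ℝ)⁻¹ • w x) q volume
      = (∫⁻ x, (‖((EuclideanSpace.equiv (Fin 3) ℝ).symm fun i =>
            ∫ ℓ : EuclideanSpace ℝ (Fin 3),
              (ε ^ 3)⁻¹ * φ (ε⁻¹ • ℓ) * ((ℓ i / ‖ℓ‖) * ∑ j, (ℓ j / ‖ℓ‖) * w (x + ℓ) j))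
          - (3 : ℝ)⁻¹ • w x‖₊ : ℝ≥0∞) ^ q') ^ (1 / q') :=
        eLpNorm_eq_lintegral_rpow_enorm_toReal hq0 hq2
  _ ≤ (∫⁻ x, (3 * ∫⁻ ℓ, Φ ℓ * D x ℓ) ^ q') ^ (1 / q') := by
      refine ENNReal.rpow_le_rpow ?_ (by positivity)
      refine lintegral_mono_ae ?_
      filter_upwards [hpt] with x hx
      exact ENNReal.rpow_le_rpow hx hq'0.le
  _ ≤ ((3 : ℝ≥0∞) ^ q' * δ ^ q') ^ (1 / q') := by
      refine ENNReal.rpow_le_rpow ?_ (by positivity)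
      have hrw : ∀ x : EuclideanSpace ℝ (Fin 3), (3 * ∫⁻ ℓ, Φ ℓ * D x ℓ) ^ q'
          = (3:ℝ≥0∞) ^ q' * (∫⁻ ℓ, Φ ℓ * D x ℓ) ^ q' := fun x =>
        ENNReal.mul_rpow_of_nonneg _ _ hq'0.le
      simp only [hrw]
      rw [lintegral_const_mul'' _ ((g_meas Φ hΦae D hD).pow_const q')]
      exact mul_le_mul_right hmain _
  _ = 3 * δ := by
      rw [← ENNReal.mul_rpow_of_nonneg _ _ hq'0.le, one_div,
        ENNReal.rpow_rpow_inv (by rw [hq'def] at hq'0; exact hq'0.ne')]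
  _ ≤ 3 * (η / 3) := by
      gcongr
      exact min_le_left _ _
  _ = η := by
      rw [mul_comm]
      exact ENNReal.div_mul_cancel (by norm_num) (by norm_num)
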